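/- Let q ≥ 2 and n ≥ 1. The characteristic polynomial of the Laplacian of the nonbinary hypercube C_q(n) equals ∏_{k=0}^{n} ∏_{l=max(0,2k−n)}^{k} ∏_{j=k}^{n+l−k} ( x − (qj − (q−1)l) )^{m(k,l)}, where m(k,l) = (q−2)^l · C(n,l) · ( C(n−l, k−l) − C(n−l, k−l−1) ) (with C(m,−1) = 0 and 0^0 = 1). Equivalently, the Laplacian eigenvalues of C_q(n) are the numbers qj − (q−1)l, with j, k, l ranging as above, counted with multiplicity m(k,l). -/

import Mathlib

/-- The support of a `q`-ary `n`-tuple: the set of coordinates where it is nonzero. -/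
def supp {n q : ℕ} (a : Fin n → Fin q) : Finset (Fin n) :=
  Finset.univ.filter (fun i => (a i : ℕ) ≠ 0)

/-- The (one-sided) adjacency relation of the nonbinary hypercube. -/
def cubeAdjRel {n q : ℕ} (a b : Fin n → Fin q) : Prop :=
  (supp a ⊆ supp b ∨ supp b ⊆ supp a) ∧
    ((supp a).card + 1 = (supp b).card ∨ (supp b).card + 1 = (supp a).card) ∧
    ∀ i ∈ supp a ∩ supp b, a i = b i

/-- The nonbinary hypercube `C_q(n)`. -/
def nonbinaryCube (n q : ℕ) : SimpleGraph (Fin n → Fin q) :=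
  SimpleGraph.fromRel cubeAdjRel

/-- `C(m, r) - C(m, r-1)`, with the convention `C(m, -1) = 0`. -/
def chooseDiff (m r : ℕ) : ℕ :=
  m.choose r - if r = 0 then 0 else m.choose (r - 1)


namespace NHC
open Finset

def lam (q : ℕ) (c : Fin q) : ℕ := if (c:ℕ) = 0 then 0 else if (c:ℕ) = q - 1 then q else 1

def U (q : ℕ) (c s : Fin q) : ℝ :=
  if (c:ℕ) = 0 then 1
  else if (c:ℕ) = q - 1 then (if (s:ℕ) = 0 then (q:ℝ) - 1 else -1)
  else (if s = c then 1 else 0) - (if (s:ℕ) = q - 1 then 1 else 0)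

noncomputable def Rv (q : ℕ) (c s : Fin q) : ℝ :=
  if (c:ℕ) = 0 then 1/q
  else if (c:ℕ) = q - 1 then (if (s:ℕ) = 0 then 1/q else -(1/(q*((q:ℝ)-1))))
  else if (s:ℕ) = 0 then 0 else (if s = c then 1 else 0) - 1/((q:ℝ)-1)

def Lstar (q : ℕ) (s t : Fin q) : ℝ :=
  (if s = t then (if (s:ℕ) = 0 then (q:ℝ)-1 else 1) else 0)
  - (if s ≠ t ∧ ((s:ℕ) = 0 ∨ (t:ℕ) = 0) then 1 else 0)

lemma sum_const_off {q : ℕ} (S : Finset (Fin q)) (f : Fin q → ℝ) (v : ℝ)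
    (h : ∀ t ∉ S, f t = v) :
    ∑ t, f t = (∑ t ∈ S, f t) + (q - S.card : ℕ) * v := by
  rw [← Finset.sum_sdiff (Finset.subset_univ S)]
  have : ∑ t ∈ Finset.univ \ S, f t = ((Finset.univ \ S).card : ℕ) * v := by
    rw [Finset.sum_congr rfl (fun t ht => h t (Finset.mem_sdiff.mp ht).2)]
    simp [mul_comm]
  rw [this, Finset.card_sdiff_of_subset (Finset.subset_univ S)]
  simp [add_comm]

lemma cast1 {q : ℕ} (hq : 2 ≤ q) : ((q - 1 : ℕ) : ℝ) = (q:ℝ) - 1 := by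
  push_cast [Nat.cast_sub (by omega : 1 ≤ q)]; ring
lemma cast2 {q : ℕ} (hq : 2 ≤ q) : ((q - 2 : ℕ) : ℝ) = (q:ℝ) - 2 := by
  push_cast [Nat.cast_sub hq]; ring

lemma eigen_U {q : ℕ} (hq : 2 ≤ q) (c s : Fin q) :
    ∑ t, Lstar q s t * U q c t = (lam q c : ℝ) * U q c s := by
  have hsq := s.2
  have hcq := c.2
  by_cases hc0 : (c:ℕ) = 0
  · by_cases hs0 : (s:ℕ) = 0
    · rw [sum_const_off {s} _ (-1) (by
        intro t ht
        have hts : ¬ t = s := by simpa using ht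
        simp only [Lstar, U, Fin.ext_iff, ne_eq] at *
        split_ifs <;> first | (exfalso; omega) | (exfalso; tauto) | ring1)]
      simp only [Finset.sum_singleton, Finset.card_singleton, Lstar, U, lam, Fin.ext_iff, ne_eq]
      rw [cast1 hq]
      split_ifs <;> first | (exfalso; omega) | (exfalso; tauto) | (push_cast; ring1)
    · rw [sum_const_off {s, ⟨0, by omega⟩} _ 0 (by
        intro t ht
        simp only [Finset.mem_insert, Finset.mem_singleton, not_or, Fin.ext_iff] at ht
        simp only [Lstar, U, Fin.ext_iff, ne_eq] at *
        split_ifs <;> first | (exfalso; omega) | (exfalso; tauto) | ring1)]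
      have hsz : s ≠ ⟨0, by omega⟩ := by simp [Fin.ext_iff, hs0]
      rw [Finset.sum_pair hsz, Finset.card_pair hsz]
      simp only [Lstar, U, lam, Fin.ext_iff, ne_eq]
      rw [cast2 hq]
      split_ifs <;> first | (exfalso; omega) | (exfalso; tauto) | (push_cast; ring1)
  · by_cases hc1 : (c:ℕ) = q - 1
    · by_cases hs0 : (s:ℕ) = 0
      · rw [sum_const_off {⟨0, by omega⟩} _ 1 (by
          intro t ht
          have htz : ¬ (t:ℕ) = 0 := by simpa [Fin.ext_iff] using ht
          simp only [Lstar, U, Fin.ext_iff, ne_eq] at *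
          split_ifs <;> first | (exfalso; omega) | (exfalso; tauto) | ring1)]
        simp only [Finset.sum_singleton, Finset.card_singleton, Lstar, U, lam, Fin.ext_iff, ne_eq]
        rw [cast1 hq]
        split_ifs <;> first | (exfalso; omega) | (exfalso; tauto) | (push_cast; ring1)
      · have hsz : (⟨0, by omega⟩ : Fin q) ≠ s := by simp [Fin.ext_iff]; omega
        rw [sum_const_off {⟨0, by omega⟩, s} _ 0 (by
          intro t ht
          simp only [Finset.mem_insert, Finset.mem_singleton, not_or, Fin.ext_iff] at ht
          simp only [Lstar, U, Fin.ext_iff, ne_eq] at *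
          split_ifs <;> first | (exfalso; omega) | (exfalso; tauto) | ring1)]
        rw [Finset.sum_pair hsz, Finset.card_pair hsz]
        simp only [Lstar, U, lam, Fin.ext_iff, ne_eq]
        split_ifs <;> first | (exfalso; omega) | (exfalso; tauto) | (push_cast; ring1)
    · have hctp : c ≠ ⟨q-1, by omega⟩ := by simp [Fin.ext_iff]; omega
      rw [sum_const_off {c, ⟨q-1, by omega⟩} _ 0 (by
        intro t ht
        simp only [Finset.mem_insert, Finset.mem_singleton, not_or, Fin.ext_iff] at ht
        simp only [Lstar, U, Fin.ext_iff, ne_eq] at *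
        split_ifs <;> first | (exfalso; omega) | (exfalso; tauto) | ring1)]
      rw [Finset.sum_pair hctp, Finset.card_pair hctp]
      simp only [Lstar, U, lam, Fin.ext_iff, ne_eq]
      split_ifs <;> first | (exfalso; omega) | (exfalso; tauto) | (push_cast; ring1)

end NHC

namespace NHC
open Finset

set_option maxHeartbeats 2000000 in
lemma dual_U {q : ℕ} (hq : 2 ≤ q) (c c' : Fin q) :
    ∑ s, Rv q c s * U q c' s = if c = c' then 1 else 0 := by
  have hsq := c.2
  have hcq := c'.2
  have hq0R : (q:ℝ) ≠ 0 := by positivity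
  have hq1R : (q:ℝ) - 1 ≠ 0 := by
    have : (2:ℝ) ≤ (q:ℝ) := by exact_mod_cast hq
    linarith
  by_cases hc0 : (c:ℕ) = 0
  · by_cases hc'0 : (c':ℕ) = 0
    · rw [sum_const_off ∅ _ (1/q) (by
        intro t _
        simp only [Rv, U, Fin.ext_iff, ne_eq] at *
        split_ifs <;> first | (exfalso; omega) | (exfalso; tauto) | ring1)]
      simp only [Finset.sum_empty, Finset.card_empty, Fin.ext_iff, Nat.sub_zero]
      split_ifs <;> first | (exfalso; omega) | (push_cast; field_simp; try ring1)
    · by_cases hc'1 : (c':ℕ) = q - 1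
      · rw [sum_const_off {⟨0, by omega⟩} _ (-(1/q)) (by
          intro t ht
          have htz : ¬ (t:ℕ) = 0 := by simpa [Fin.ext_iff] using ht
          simp only [Rv, U, Fin.ext_iff, ne_eq] at *
          split_ifs <;> first | (exfalso; omega) | (exfalso; tauto) | ring1)]
        simp only [Finset.sum_singleton, Finset.card_singleton, Rv, U, Fin.ext_iff, ne_eq]
        rw [cast1 hq]
        split_ifs <;> first | (exfalso; omega) | (exfalso; tauto) | (push_cast; field_simp; try ring1)
      · have h1 : c' ≠ (⟨q-1, by omega⟩ : Fin q) := by simp [Fin.ext_iff]; omega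
        rw [sum_const_off {c', ⟨q-1, by omega⟩} _ 0 (by
          intro t ht
          simp only [Finset.mem_insert, Finset.mem_singleton, not_or, Fin.ext_iff] at ht
          simp only [Rv, U, Fin.ext_iff, ne_eq] at *
          split_ifs <;> first | (exfalso; omega) | (exfalso; tauto) | ring1)]
        rw [Finset.sum_pair h1, Finset.card_pair h1]
        simp only [Rv, U, Fin.ext_iff, ne_eq]
        split_ifs <;> first | (exfalso; omega) | (exfalso; tauto) | (push_cast; field_simp; try ring1)
  · by_cases hc1 : (c:ℕ) = q - 1
    · by_cases hc'0 : (c':ℕ) = 0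
      · rw [sum_const_off {⟨0, by omega⟩} _ (-(1/(q*((q:ℝ)-1)))) (by
          intro t ht
          have htz : ¬ (t:ℕ) = 0 := by simpa [Fin.ext_iff] using ht
          simp only [Rv, U, Fin.ext_iff, ne_eq] at *
          split_ifs <;> first | (exfalso; omega) | (exfalso; tauto) | ring1)]
        simp only [Finset.sum_singleton, Finset.card_singleton, Rv, U, Fin.ext_iff, ne_eq]
        rw [cast1 hq]
        split_ifs <;> first | (exfalso; omega) | (exfalso; tauto) | (push_cast; field_simp; try ring1)
      · by_cases hc'1 : (c':ℕ) = q - 1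
        · rw [sum_const_off {⟨0, by omega⟩} _ (1/(q*((q:ℝ)-1))) (by
            intro t ht
            have htz : ¬ (t:ℕ) = 0 := by simpa [Fin.ext_iff] using ht
            simp only [Rv, U, Fin.ext_iff, ne_eq] at *
            split_ifs <;> first | (exfalso; omega) | (exfalso; tauto) | (push_cast; field_simp; try ring1))]
          simp only [Finset.sum_singleton, Finset.card_singleton, Rv, U, Fin.ext_iff, ne_eq]
          rw [cast1 hq]
          split_ifs <;> first | (exfalso; omega) | (exfalso; tauto) | (push_cast; field_simp; try ring1)
        · have h1 : c' ≠ (⟨q-1, by omega⟩ : Fin q) := by simp [Fin.ext_iff]; omega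
          rw [sum_const_off {c', ⟨q-1, by omega⟩} _ 0 (by
            intro t ht
            simp only [Finset.mem_insert, Finset.mem_singleton, not_or, Fin.ext_iff] at ht
            simp only [Rv, U, Fin.ext_iff, ne_eq] at *
            split_ifs <;> first | (exfalso; omega) | (exfalso; tauto) | ring1)]
          rw [Finset.sum_pair h1, Finset.card_pair h1]
          simp only [Rv, U, Fin.ext_iff, ne_eq]
          split_ifs <;> first | (exfalso; omega) | (exfalso; tauto) | (push_cast; field_simp; try ring1)
    · -- c middle
      by_cases hc'0 : (c':ℕ) = 0
      · have h1 : (⟨0, by omega⟩ : Fin q) ≠ c := by simp [Fin.ext_iff]; omega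
        rw [sum_const_off {⟨0, by omega⟩, c} _ (-(1/((q:ℝ)-1))) (by
          intro t ht
          simp only [Finset.mem_insert, Finset.mem_singleton, not_or, Fin.ext_iff] at ht
          simp only [Rv, U, Fin.ext_iff, ne_eq] at *
          split_ifs <;> first | (exfalso; omega) | (exfalso; tauto) | ring1)]
        rw [Finset.sum_pair h1, Finset.card_pair h1, cast2 hq]
        simp only [Rv, U, Fin.ext_iff, ne_eq]
        split_ifs <;> first | (exfalso; omega) | (exfalso; tauto) | (push_cast; field_simp; try ring1)
      · by_cases hc'1 : (c':ℕ) = q - 1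
        · have h1 : (⟨0, by omega⟩ : Fin q) ≠ c := by simp [Fin.ext_iff]; omega
          rw [sum_const_off {⟨0, by omega⟩, c} _ (1/((q:ℝ)-1)) (by
            intro t ht
            simp only [Finset.mem_insert, Finset.mem_singleton, not_or, Fin.ext_iff] at ht
            simp only [Rv, U, Fin.ext_iff, ne_eq] at *
            split_ifs <;> first | (exfalso; omega) | (exfalso; tauto) | ring1)]
          rw [Finset.sum_pair h1, Finset.card_pair h1, cast2 hq]
          simp only [Rv, U, Fin.ext_iff, ne_eq]
          split_ifs <;> first | (exfalso; omega) | (exfalso; tauto) | (push_cast; field_simp; try ring1)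
        · -- both middle
          by_cases hcc : c = c'
          · subst hcc
            have h1 : (⟨0, by omega⟩ : Fin q) ≠ c := by simp [Fin.ext_iff]; omega
            have h2 : (⟨0, by omega⟩ : Fin q) ∉ ({c, ⟨q-1, by omega⟩} : Finset (Fin q)) := by
              simp [Fin.ext_iff]; omega
            have h3 : c ∉ ({(⟨q-1, by omega⟩ : Fin q)} : Finset (Fin q)) := by
              simp [Fin.ext_iff]; omega
            rw [sum_const_off {⟨0, by omega⟩, c, ⟨q-1, by omega⟩} _ 0 (by
              intro t ht
              simp only [Finset.mem_insert, Finset.mem_singleton, not_or, Fin.ext_iff] at ht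
              simp only [Rv, U, Fin.ext_iff, ne_eq] at *
              split_ifs <;> first | (exfalso; omega) | (exfalso; tauto) | ring1)]
            rw [Finset.sum_insert h2, Finset.sum_insert h3, Finset.sum_singleton,
              Finset.card_insert_of_notMem h2, Finset.card_insert_of_notMem h3,
              Finset.card_singleton]
            simp only [Rv, U, Fin.ext_iff, ne_eq]
            split_ifs <;> first | (exfalso; omega) | (exfalso; tauto) | (push_cast; field_simp; try ring1)
          · have hccv : ¬ (c:ℕ) = (c':ℕ) := by simp [Fin.ext_iff] at hcc; exact hcc
            have h2 : (⟨0, by omega⟩ : Fin q) ∉ ({c, c', ⟨q-1, by omega⟩} : Finset (Fin q)) := by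
              simp [Fin.ext_iff]; omega
            have h3 : c ∉ ({c', (⟨q-1, by omega⟩ : Fin q)} : Finset (Fin q)) := by
              simp [Fin.ext_iff]; omega
            have h4 : c' ∉ ({(⟨q-1, by omega⟩ : Fin q)} : Finset (Fin q)) := by
              simp [Fin.ext_iff]; omega
            rw [sum_const_off {⟨0, by omega⟩, c, c', ⟨q-1, by omega⟩} _ 0 (by
              intro t ht
              simp only [Finset.mem_insert, Finset.mem_singleton, not_or, Fin.ext_iff] at ht
              simp only [Rv, U, Fin.ext_iff, ne_eq] at *
              split_ifs <;> first | (exfalso; omega) | (exfalso; tauto) | ring1)]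
            rw [Finset.sum_insert h2, Finset.sum_insert h3, Finset.sum_insert h4,
              Finset.sum_singleton,
              Finset.card_insert_of_notMem h2, Finset.card_insert_of_notMem h3,
              Finset.card_insert_of_notMem h4, Finset.card_singleton]
            simp only [Rv, U, Fin.ext_iff, ne_eq]
            split_ifs <;> first | (exfalso; omega) | (exfalso; tauto) | (push_cast; field_simp; try ring1)

end NHC

namespace NHC
open Finset

lemma mem_supp {n q : ℕ} {a : Fin n → Fin q} {i : Fin n} : i ∈ supp a ↔ (a i : ℕ) ≠ 0 := by
  simp [supp]

lemma forward {n q : ℕ} {a b : Fin n → Fin q}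
    (hcard : (supp a).card + 1 = (supp b).card)
    (hnest : supp a ⊆ supp b ∨ supp b ⊆ supp a)
    (hagree : ∀ i ∈ supp a ∩ supp b, a i = b i) :
    ∃ i, a i ≠ b i ∧ ((a i : ℕ) = 0 ∨ (b i : ℕ) = 0) ∧ ∀ j, j ≠ i → a j = b j := by
  have hsub : supp a ⊆ supp b := by
    rcases hnest with h | h
    · exact h
    · have := Finset.card_le_card h; omega
  have hcard' : (supp b \ supp a).card = 1 := by
    rw [Finset.card_sdiff_of_subset hsub]; omega
  obtain ⟨i, hi⟩ := Finset.card_eq_one.mp hcard'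
  have hiM : i ∈ supp b \ supp a := hi ▸ Finset.mem_singleton_self i
  rw [Finset.mem_sdiff] at hiM
  have hia : (a i : ℕ) = 0 := by have := hiM.2; rw [mem_supp] at this; omega
  have hib : (b i : ℕ) ≠ 0 := mem_supp.mp hiM.1
  refine ⟨i, ?_, Or.inl hia, ?_⟩
  · intro h; rw [h] at hia; exact hib hia
  · intro j hj
    by_cases hja : j ∈ supp a
    · exact hagree j (Finset.mem_inter.mpr ⟨hja, hsub hja⟩)
    · by_cases hjb : j ∈ supp b
      · exfalso
        have : j ∈ supp b \ supp a := Finset.mem_sdiff.mpr ⟨hjb, hja⟩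
        rw [hi, Finset.mem_singleton] at this
        exact hj this
      · rw [mem_supp, not_not] at hja hjb
        exact Fin.ext (by omega)

lemma backward {n q : ℕ} {a b : Fin n → Fin q} (i : Fin n)
    (hne : a i ≠ b i) (h0 : (a i : ℕ) = 0) (hag : ∀ j, j ≠ i → a j = b j) :
    cubeAdjRel a b := by
  have hbi : (b i : ℕ) ≠ 0 := by
    intro h
    exact hne (Fin.ext (by omega))
  have hia : i ∉ supp a := by rw [mem_supp]; omega
  have hsupp : supp b = insert i (supp a) := by
    ext j
    by_cases hj : j = i
    · subst hj
      simp [mem_supp, hbi]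
    · rw [mem_supp, Finset.mem_insert, mem_supp, ← hag j hj]
      simp [hj]
  constructor
  · left
    rw [hsupp]
    exact fun x hx => Finset.mem_insert_of_mem hx
  refine ⟨Or.inl ?_, ?_⟩
  · rw [hsupp, Finset.card_insert_of_notMem hia]
  · intro j hj
    rw [Finset.mem_inter, mem_supp] at hj
    have : j ≠ i := fun h => by rw [h] at hj; exact hj.1 h0
    exact hag j this

lemma cubeAdjRel_symm {n q : ℕ} {a b : Fin n → Fin q} (h : cubeAdjRel a b) : cubeAdjRel b a := by
  obtain ⟨h1, h2, h3⟩ := h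
  exact ⟨h1.symm, h2.symm, fun i hi => (h3 i (by rwa [Finset.inter_comm])).symm⟩

lemma adj_iff {n q : ℕ} (a b : Fin n → Fin q) :
    (nonbinaryCube n q).Adj a b ↔
      ∃ i, a i ≠ b i ∧ ((a i : ℕ) = 0 ∨ (b i : ℕ) = 0) ∧ ∀ j, j ≠ i → a j = b j := by
  rw [nonbinaryCube, SimpleGraph.fromRel_adj]
  constructor
  · rintro ⟨hne, h | h⟩
    · obtain ⟨hnest, hc | hc, hagree⟩ := h
      · exact forward hc hnest hagree
      · obtain ⟨i, h1, h2, h3⟩ := forward hc hnest.symm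
          (fun i hi => (hagree i (by rwa [Finset.inter_comm])).symm)
        exact ⟨i, fun h => h1 h.symm, h2.symm, fun j hj => (h3 j hj).symm⟩
    · obtain ⟨hnest, hc | hc, hagree⟩ := h
      · obtain ⟨i, h1, h2, h3⟩ := forward hc hnest hagree
        exact ⟨i, fun h => h1 h.symm, h2.symm, fun j hj => (h3 j hj).symm⟩
      · obtain ⟨i, h1, h2, h3⟩ := forward hc hnest.symm
          (fun i hi => (hagree i (by rwa [Finset.inter_comm])).symm)
        exact ⟨i, h1, h2, h3⟩
  · rintro ⟨i, h1, h2, h3⟩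
    refine ⟨fun h => h1 (congrFun h i), ?_⟩
    rcases h2 with h0 | h0
    · exact Or.inl (backward i h1 h0 h3)
    · exact Or.inr (backward i (fun h => h1 h.symm) h0 (fun j hj => (h3 j hj).symm))



open Finset Matrix Polynomial

variable (q n : ℕ)

noncomputable def bigP : Matrix (Fin n → Fin q) (Fin n → Fin q) ℝ :=
  fun a b => ∏ i, U q (b i) (a i)

noncomputable def bigR : Matrix (Fin n → Fin q) (Fin n → Fin q) ℝ :=
  fun b a => ∏ i, Rv q (b i) (a i)

noncomputable def bigD : Matrix (Fin n → Fin q) (Fin n → Fin q) ℝ :=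
  Matrix.diagonal (fun b => ((∑ i, lam q (b i) : ℕ) : ℝ))

variable {q n}

lemma RP_one (hq : 2 ≤ q) : bigR q n * bigP q n = 1 := by
  ext b b'
  rw [Matrix.mul_apply]
  have h1 : ∀ a : Fin n → Fin q, bigR q n b a * bigP q n a b'
      = ∏ i, (Rv q (b i) (a i) * U q (b' i) (a i)) := by
    intro a; rw [bigR, bigP, ← Finset.prod_mul_distrib]
  rw [Finset.sum_congr rfl (fun a _ => h1 a)]
  have key : ∑ a : Fin n → Fin q, ∏ i, (Rv q (b i) (a i) * U q (b' i) (a i))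
      = ∏ i, ∑ t, Rv q (b i) t * U q (b' i) t := by
    rw [Finset.prod_univ_sum, ← Fintype.piFinset_univ]
  rw [key]
  have h2 : ∀ i, ∑ t, Rv q (b i) t * U q (b' i) t = if b i = b' i then 1 else 0 :=
    fun i => dual_U hq (b i) (b' i)
  rw [Finset.prod_congr rfl (fun i _ => h2 i)]
  by_cases hbb : b = b'
  · subst hbb
    simp [Matrix.one_apply]
  · rw [Matrix.one_apply_ne hbb]
    obtain ⟨i, hi⟩ : ∃ i, b i ≠ b' i := by
      by_contra h
      push_neg at h
      exact hbb (funext h)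
    exact Finset.prod_eq_zero (Finset.mem_univ i) (if_neg hi)

lemma sum_update {g : (Fin n → Fin q) → ℝ} (a : Fin n → Fin q) (i : Fin n)
    (hg : ∀ a', (∃ j, j ≠ i ∧ a' j ≠ a j) → g a' = 0) :
    ∑ a', g a' = ∑ t, g (Function.update a i t) := by
  have h1 : ∑ a' ∈ Finset.univ.image (fun t => Function.update a i t), g a'
      = ∑ t, g (Function.update a i t) :=
    Finset.sum_image (fun x _ y _ h => Function.update_injective a i h)
  rw [← h1]
  apply (Finset.sum_subset (Finset.subset_univ _) ?_).symm
  intro a' _ ha'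
  apply hg
  by_contra h
  push_neg at h
  apply ha'
  rw [Finset.mem_image]
  refine ⟨a' i, Finset.mem_univ _, ?_⟩
  funext j
  by_cases hj : j = i
  · subst hj; simp
  · rw [Function.update_of_ne hj]
    exact (h j hj).symm

lemma lap_entry (hq : 2 ≤ q) [inst : DecidableRel (nonbinaryCube n q).Adj]
    (a a' : Fin n → Fin q) :
    (nonbinaryCube n q).lapMatrix ℝ a a'
      = ∑ i, (if ∀ j, j ≠ i → a j = a' j then Lstar q (a i) (a' i) else 0) := by
  rw [SimpleGraph.lapMatrix, Matrix.sub_apply, SimpleGraph.degMatrix,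
    SimpleGraph.adjMatrix_apply]
  by_cases haa : a = a'
  · subst haa
    rw [Matrix.diagonal_apply_eq, if_neg (SimpleGraph.irrefl _), sub_zero]
    rw [SimpleGraph.degree_eq_sum_if_adj]
    have key : ∀ b : Fin n → Fin q, (if (nonbinaryCube n q).Adj a b then (1:ℝ) else 0)
        = ∑ i, (if (a i ≠ b i ∧ ((a i : ℕ) = 0 ∨ (b i : ℕ) = 0) ∧ ∀ j, j ≠ i → a j = b j)
            then (1:ℝ) else 0) := by
      intro b
      by_cases hb : (nonbinaryCube n q).Adj a b
      · obtain ⟨i₀, h1, h2, h3⟩ := (adj_iff a b).mp hb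
        rw [if_pos hb, Finset.sum_eq_single i₀]
        · rw [if_pos ⟨h1, h2, h3⟩]
        · intro i _ hi
          apply if_neg
          rintro ⟨g1, _, _⟩
          exact g1 (h3 i hi)
        · intro h; exact absurd (Finset.mem_univ i₀) h
      · rw [if_neg hb, Finset.sum_eq_zero]
        intro i _
        apply if_neg
        rintro ⟨g1, g2, g3⟩
        exact hb ((adj_iff a b).mpr ⟨i, g1, g2, g3⟩)
    rw [Finset.sum_congr rfl (fun b _ => key b), Finset.sum_comm]
    apply Finset.sum_congr rfl
    intro i _
    rw [if_pos (fun j _ => rfl)]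
    rw [sum_update a i (fun a'' h => by
      apply if_neg
      rintro ⟨_, _, g3⟩
      obtain ⟨j, hj, hj2⟩ := h
      exact hj2 (g3 j hj).symm)]
    have upd : ∀ t : Fin q,
        (if (a i ≠ Function.update a i t i ∧
            ((a i : ℕ) = 0 ∨ ((Function.update a i t i : Fin q) : ℕ) = 0) ∧
            ∀ j, j ≠ i → a j = Function.update a i t j) then (1:ℝ) else 0)
        = if (a i ≠ t ∧ ((a i : ℕ) = 0 ∨ (t : ℕ) = 0)) then (1:ℝ) else 0 := by
      intro t
      have h1 : Function.update a i t i = t := by simp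
      have h2 : ∀ j, j ≠ i → a j = Function.update a i t j := by
        intro j hj; rw [Function.update_of_ne hj]
      rw [h1]
      by_cases hcond : a i ≠ t ∧ ((a i : ℕ) = 0 ∨ (t : ℕ) = 0)
      · rw [if_pos ⟨hcond.1, hcond.2, h2⟩, if_pos hcond]
      · rw [if_neg (fun g => hcond ⟨g.1, g.2.1⟩), if_neg hcond]
    rw [Finset.sum_congr rfl (fun t _ => upd t)]
    have hL1 : Lstar q (a i) (a i)
        = if (a i : ℕ) = 0 then (q:ℝ) - 1 else 1 := by
      rw [Lstar]
      have hne : ¬ (a i ≠ a i ∧ ((a i : ℕ) = 0 ∨ (a i : ℕ) = 0)) := fun g => g.1 rfl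
      rw [if_pos rfl, if_neg hne, sub_zero]
    rw [hL1]
    by_cases hai : (a i : ℕ) = 0
    · rw [if_pos hai]
      rw [sum_const_off {a i} _ 1 (by
        intro t ht
        have hta : ¬ t = a i := by simpa using ht
        have : a i ≠ t ∧ ((a i : ℕ) = 0 ∨ (t : ℕ) = 0) :=
          ⟨fun h => hta h.symm, Or.inl hai⟩
        rw [if_pos this])]
      have hne : ¬ (a i ≠ a i ∧ ((a i : ℕ) = 0 ∨ ((a i : Fin q) : ℕ) = 0)) := fun g => g.1 rfl
      rw [Finset.sum_singleton, if_neg hne, Finset.card_singleton, cast1 hq]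
      ring
    · rw [if_neg hai]
      rw [sum_const_off {⟨0, by omega⟩} _ 0 (by
        intro t ht
        have htz : ¬ (t:ℕ) = 0 := by simpa [Fin.ext_iff] using ht
        have : ¬ (a i ≠ t ∧ ((a i : ℕ) = 0 ∨ (t : ℕ) = 0)) := by
          rintro ⟨_, h | h⟩
          exacts [hai h, htz h]
        rw [if_neg this])]
      have hzc : a i ≠ (⟨0, by omega⟩ : Fin q) ∧
          ((a i : ℕ) = 0 ∨ (((⟨0, by omega⟩ : Fin q)) : ℕ) = 0) := by
        constructor
        · simp [Fin.ext_iff]; omega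
        · exact Or.inr rfl
      rw [Finset.sum_singleton, if_pos hzc]
      simp
  · rw [Matrix.diagonal_apply_ne _ haa, zero_sub]
    by_cases hone : ∃ i, ∀ j, j ≠ i → a j = a' j
    · obtain ⟨i₀, hi₀⟩ := hone
      have hd : a i₀ ≠ a' i₀ := by
        intro h
        apply haa
        funext j
        by_cases hj : j = i₀
        · rwa [hj]
        · exact hi₀ j hj
      rw [Finset.sum_eq_single i₀]
      · rw [if_pos hi₀, Lstar, if_neg hd]
        by_cases hzero : (a i₀ : ℕ) = 0 ∨ (a' i₀ : ℕ) = 0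
        · have hadj : (nonbinaryCube n q).Adj a a' := (adj_iff a a').mpr ⟨i₀, hd, hzero, hi₀⟩
          have hc : a i₀ ≠ a' i₀ ∧ ((a i₀ : ℕ) = 0 ∨ (a' i₀ : ℕ) = 0) := ⟨hd, hzero⟩
          rw [if_pos hadj, if_pos hc]
          ring
        · have hnadj : ¬ (nonbinaryCube n q).Adj a a' := by
            intro hadj
            obtain ⟨i, g1, g2, g3⟩ := (adj_iff a a').mp hadj
            have : i = i₀ := by
              by_contra hii
              exact g1 (hi₀ i hii)
            subst this
            exact hzero g2
          have hc : ¬ (a i₀ ≠ a' i₀ ∧ ((a i₀ : ℕ) = 0 ∨ (a' i₀ : ℕ) = 0)) := fun g => hzero g.2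
          rw [if_neg hnadj, if_neg hc]
          ring
      · intro i _ hi
        apply if_neg
        intro h
        exact hd (h i₀ (Ne.symm hi))
      · intro h; exact absurd (Finset.mem_univ i₀) h
    · have hnadj : ¬ (nonbinaryCube n q).Adj a a' := by
        intro hadj
        obtain ⟨i, g1, g2, g3⟩ := (adj_iff a a').mp hadj
        exact hone ⟨i, g3⟩
      rw [Finset.sum_eq_zero (fun i _ => if_neg (fun h => hone ⟨i, h⟩)), if_neg hnadj]
      ring


lemma lap_mul (hq : 2 ≤ q) [inst : DecidableRel (nonbinaryCube n q).Adj] :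
    (nonbinaryCube n q).lapMatrix ℝ * bigP q n = bigP q n * bigD q n := by
  ext a b
  rw [Matrix.mul_apply, bigD, Matrix.mul_diagonal]
  have step1 : ∀ a' : Fin n → Fin q,
      (nonbinaryCube n q).lapMatrix ℝ a a' * bigP q n a' b
        = ∑ i, (if ∀ j, j ≠ i → a j = a' j then Lstar q (a i) (a' i) else 0) * bigP q n a' b := by
    intro a'
    rw [lap_entry hq, Finset.sum_mul]
  rw [Finset.sum_congr rfl (fun a' _ => step1 a'), Finset.sum_comm]
  have step2 : ∀ i : Fin n,
      (∑ a' : Fin n → Fin q,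
        (if ∀ j, j ≠ i → a j = a' j then Lstar q (a i) (a' i) else 0) * bigP q n a' b)
      = ((lam q (b i) : ℝ)) * bigP q n a b := by
    intro i
    rw [sum_update a i (fun a'' h => by
      obtain ⟨j, hj, hj2⟩ := h
      have : ¬ ∀ j, j ≠ i → a j = a'' j := fun g => hj2 (g j hj).symm
      rw [if_neg this, zero_mul])]
    have hupd : ∀ t : Fin q,
        (if ∀ j, j ≠ i → a j = Function.update a i t j
            then Lstar q (a i) (Function.update a i t i) else 0)
          * bigP q n (Function.update a i t) b
        = Lstar q (a i) t * (U q (b i) t * ∏ j ∈ Finset.univ.erase i, U q (b j) (a j)) := by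
      intro t
      have hc : ∀ j, j ≠ i → a j = Function.update a i t j := by
        intro j hj; rw [Function.update_of_ne hj]
      rw [if_pos hc, Function.update_self]
      congr 1
      rw [bigP, ← Finset.mul_prod_erase _ _ (Finset.mem_univ i), Function.update_self]
      congr 1
      apply Finset.prod_congr rfl
      intro j hj
      rw [Function.update_of_ne (Finset.mem_erase.mp hj).1]
    rw [Finset.sum_congr rfl (fun t _ => hupd t)]
    have rearr : ∀ t : Fin q, Lstar q (a i) t * (U q (b i) t * ∏ j ∈ Finset.univ.erase i, U q (b j) (a j))
        = (Lstar q (a i) t * U q (b i) t) * ∏ j ∈ Finset.univ.erase i, U q (b j) (a j) := by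
      intro t; ring
    rw [Finset.sum_congr rfl (fun t _ => rearr t), ← Finset.sum_mul, eigen_U hq]
    rw [bigP, ← Finset.mul_prod_erase _ _ (Finset.mem_univ i)]
    ring
  rw [Finset.sum_congr rfl (fun i _ => step2 i), ← Finset.sum_mul]
  rw [Nat.cast_sum]
  ring

lemma charpoly_conj {m : Type*} [Fintype m] [DecidableEq m] (M P R D : Matrix m m ℝ)
    (h1 : P * R = 1) (h2 : M * P = P * D) : M.charpoly = D.charpoly := by
  have hM : M = P * D * R := by
    calc M = M * (P * R) := by rw [h1, mul_one]
    _ = (M * P) * R := by rw [Matrix.mul_assoc]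
    _ = P * D * R := by rw [h2]
  rw [Matrix.charpoly, Matrix.charpoly, hM]
  set PC := P.map (C : ℝ →+* ℝ[X]) with hPC
  set RC := R.map (C : ℝ →+* ℝ[X]) with hRC
  have hPRC : PC * RC = 1 := by
    rw [hPC, hRC, ← Matrix.map_mul, h1, Matrix.map_one _ (map_zero C) (map_one C)]
  have hchar : Matrix.charmatrix (P * D * R) = PC * Matrix.charmatrix D * RC := by
    rw [Matrix.charmatrix, Matrix.charmatrix]
    rw [Matrix.mul_sub, Matrix.sub_mul]
    congr 1
    · have hcomm : Matrix.scalar m (X : ℝ[X]) * RC = RC * Matrix.scalar m (X : ℝ[X]) :=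
        ((Matrix.scalar_commute (X : ℝ[X]) (fun r' => Commute.all _ _) RC)).eq
      rw [Matrix.mul_assoc, hcomm, ← Matrix.mul_assoc, hPRC, one_mul]
    · simp only [RingHom.mapMatrix_apply]
      rw [← Matrix.map_mul, ← Matrix.map_mul]
  rw [hchar, Matrix.det_mul, Matrix.det_mul]
  have : PC.det * RC.det = 1 := by
    rw [← Matrix.det_mul, hPRC, Matrix.det_one]
  calc PC.det * (Matrix.charmatrix D).det * RC.det
      = (Matrix.charmatrix D).det * (PC.det * RC.det) := by ring
    _ = (Matrix.charmatrix D).det := by rw [this, mul_one]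

lemma charpoly_diag {m : Type*} [Fintype m] [DecidableEq m] (d : m → ℝ) :
    (Matrix.diagonal d).charpoly = ∏ i, (X - C (d i)) := by
  rw [Matrix.charpoly]
  have hcd : Matrix.charmatrix (Matrix.diagonal d)
      = Matrix.diagonal (fun i => (X : ℝ[X]) - C (d i)) := by
    ext i j
    by_cases h : i = j
    · subst h
      rw [Matrix.charmatrix_apply_eq, Matrix.diagonal_apply_eq, Matrix.diagonal_apply_eq]
    · rw [Matrix.charmatrix_apply_ne _ _ _ h, Matrix.diagonal_apply_ne _ h,
        Matrix.diagonal_apply_ne _ h, map_zero, neg_zero]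
  rw [hcd, Matrix.det_diagonal]

lemma charpoly_lap (hq : 2 ≤ q) [inst : DecidableRel (nonbinaryCube n q).Adj] :
    ((nonbinaryCube n q).lapMatrix ℝ).charpoly
      = ∏ b : Fin n → Fin q, ((X : ℝ[X]) - C ((∑ i, lam q (b i) : ℕ) : ℝ)) := by
  have h1 := RP_one (n := n) hq
  have h2 := lap_mul (n := n) hq (inst := inst)
  exact (charpoly_conj _ _ _ _ (mul_eq_one_comm.mp h1) h2).trans (charpoly_diag _)

end NHC

namespace NHC
open Finset Polynomial


variable {q n : ℕ}

def Atop (b : Fin n → Fin q) : Finset (Fin n) := univ.filter (fun i => (b i : ℕ) = q - 1)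
def Lmid (b : Fin n → Fin q) : Finset (Fin n) :=
  univ.filter (fun i => (b i : ℕ) ≠ 0 ∧ (b i : ℕ) ≠ q - 1)

lemma lam_sum (hq : 2 ≤ q) (b : Fin n → Fin q) :
    ∑ i, lam q (b i) = q * (Atop b).card + (Lmid b).card := by
  have hpt : ∀ i, lam q (b i)
      = (if i ∈ Atop b then q else 0) + (if i ∈ Lmid b then 1 else 0) := by
    intro i
    simp only [lam, Atop, Lmid, Finset.mem_filter, Finset.mem_univ, true_and]
    have := (b i).2
    split_ifs <;> omega
  rw [Finset.sum_congr rfl (fun i _ => hpt i), Finset.sum_add_distrib]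
  rw [Finset.sum_ite_mem, Finset.sum_ite_mem, Finset.univ_inter, Finset.univ_inter]
  simp [mul_comm]

lemma card_mid (hq : 2 ≤ q) :
    (univ.filter (fun t : Fin q => (t:ℕ) ≠ 0 ∧ (t:ℕ) ≠ q - 1)).card = q - 2 := by
  classical
  have hsplit := Finset.card_filter_add_card_filter_not
    (s := (univ : Finset (Fin q))) (p := fun t : Fin q => (t:ℕ) ≠ 0 ∧ (t:ℕ) ≠ q - 1)
  have hneg : (univ.filter (fun t : Fin q => ¬ ((t:ℕ) ≠ 0 ∧ (t:ℕ) ≠ q - 1)))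
      = {(⟨0, by omega⟩ : Fin q), ⟨q-1, by omega⟩} := by
    ext t
    simp only [Finset.mem_filter, Finset.mem_univ, true_and, Finset.mem_insert,
      Finset.mem_singleton, Fin.ext_iff]
    have := t.2
    constructor
    · intro h; omega
    · intro h; omega
  have hcard2 : ({(⟨0, by omega⟩ : Fin q), ⟨q-1, by omega⟩} : Finset (Fin q)).card = 2 := by
    rw [Finset.card_pair (by simp [Fin.ext_iff]; omega)]
  rw [hneg, hcard2, Finset.card_univ, Fintype.card_fin] at hsplit
  omega

lemma card_fiber_sets (hq : 2 ≤ q) (A L : Finset (Fin n)) (hAL : Disjoint A L) :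
    (univ.filter (fun b : Fin n → Fin q => Atop b = A ∧ Lmid b = L)).card
      = (q - 2) ^ L.card := by
  classical
  have hpi : (L.pi (fun _ => univ.filter (fun t : Fin q => (t:ℕ) ≠ 0 ∧ (t:ℕ) ≠ q - 1))).card
      = (q - 2) ^ L.card := by
    rw [Finset.card_pi, Finset.prod_congr rfl (fun i _ => card_mid hq), Finset.prod_const]
  rw [← hpi]
  apply Finset.card_bij' (i := fun b _ => fun i _ => b i)
    (j := fun g _ => fun i =>
      if i ∈ A then (⟨q-1, by omega⟩ : Fin q)
      else if hL : i ∈ L then g i hL else ⟨0, by omega⟩)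
  case hi =>
    intro b hb
    rw [Finset.mem_filter] at hb
    rw [Finset.mem_pi]
    intro i hi
    rw [← hb.2.2] at hi
    simp only [Lmid, Finset.mem_filter] at hi
    simp only [Finset.mem_filter, Finset.mem_univ, true_and]
    exact hi.2
  case hj =>
    intro g hg
    rw [Finset.mem_pi] at hg
    rw [Finset.mem_filter]
    refine ⟨Finset.mem_univ _, ?_, ?_⟩
    · ext i
      simp only [Atop, Finset.mem_filter, Finset.mem_univ, true_and]
      by_cases hA : i ∈ A
      · simp [hA]
      · rw [if_neg hA]
        by_cases hL : i ∈ L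
        · rw [dif_pos hL]
          have := hg i hL
          simp only [Finset.mem_filter, Finset.mem_univ, true_and] at this
          simp only [iff_false_intro hA, iff_false]
          exact this.2
        · rw [dif_neg hL]
          simp only [iff_false_intro hA, iff_false]
          omega
    · ext i
      simp only [Lmid, Finset.mem_filter, Finset.mem_univ, true_and]
      by_cases hA : i ∈ A
      · rw [if_pos hA]
        have hiL : i ∉ L := Finset.disjoint_left.mp hAL hA
        simp only [iff_false_intro hiL, iff_false]
        intro h
        exact h.2 rfl
      · rw [if_neg hA]
        by_cases hL : i ∈ L
        · rw [dif_pos hL]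
          have := hg i hL
          simp only [Finset.mem_filter, Finset.mem_univ, true_and] at this
          simp only [iff_true_intro hL, iff_true]
          exact this
        · rw [dif_neg hL]
          simp only [iff_false_intro hL, iff_false]
          intro h
          exact h.1 rfl
  case left_inv =>
    intro b hb
    rw [Finset.mem_filter] at hb
    funext i
    by_cases hA : i ∈ A
    · rw [if_pos hA]
      rw [← hb.2.1] at hA
      simp only [Atop, Finset.mem_filter] at hA
      exact (Fin.ext hA.2).symm
    · rw [if_neg hA]
      by_cases hL : i ∈ L
      · rw [dif_pos hL]
      · rw [dif_neg hL]
        rw [← hb.2.1] at hA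
        rw [← hb.2.2] at hL
        simp only [Atop, Lmid, Finset.mem_filter, Finset.mem_univ, true_and] at hA hL
        have h0 : (b i : ℕ) = 0 := by tauto
        exact (Fin.ext h0).symm
  case right_inv =>
    intro g hg
    funext i hi
    have hA : i ∉ A := Finset.disjoint_right.mp hAL hi
    simp only [if_neg hA, dif_pos hi]


def Tpairs (n a l : ℕ) : Finset (Finset (Fin n) × Finset (Fin n)) :=
  ((univ.powersetCard a) ×ˢ (univ.powersetCard l)).filter (fun p => Disjoint p.1 p.2)

lemma card_Tpairs (a l : ℕ) : (Tpairs n a l).card = n.choose a * (n - a).choose l := by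
  classical
  have key : (Tpairs n a l).card
      = ((univ.powersetCard a).sigma (fun A : Finset (Fin n) => Aᶜ.powersetCard l)).card := by
    apply Finset.card_bij' (i := fun p _ => (⟨p.1, p.2⟩ : Σ _ : Finset (Fin n), Finset (Fin n)))
      (j := fun x _ => (x.1, x.2))
    case hi =>
      intro p hp
      rw [Tpairs, Finset.mem_filter, Finset.mem_product] at hp
      rw [Finset.mem_sigma]
      refine ⟨hp.1.1, ?_⟩
      rw [Finset.mem_powersetCard]
      refine ⟨?_, (Finset.mem_powersetCard.mp hp.1.2).2⟩
      intro x hx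
      rw [Finset.mem_compl]
      exact fun hxA => (Finset.disjoint_left.mp hp.2) hxA hx
    case hj =>
      intro x hx
      rw [Finset.mem_sigma] at hx
      rw [Tpairs, Finset.mem_filter, Finset.mem_product]
      have h2 := Finset.mem_powersetCard.mp hx.2
      refine ⟨⟨hx.1, Finset.mem_powersetCard.mpr ⟨Finset.subset_univ _, h2.2⟩⟩, ?_⟩
      rw [Finset.disjoint_left]
      intro y hy hyx
      have := h2.1 hyx
      rw [Finset.mem_compl] at this
      exact this hy
    case left_inv => intro p _; rfl
    case right_inv => intro x _; rfl
  rw [key, Finset.card_sigma]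
  have hterm : ∀ A ∈ (univ : Finset (Fin n)).powersetCard a, (Aᶜ.powersetCard l).card = (n - a).choose l := by
    intro A hA
    rw [Finset.card_powersetCard, Finset.card_compl, Fintype.card_fin,
      (Finset.mem_powersetCard.mp hA).2]
  rw [Finset.sum_congr rfl hterm, Finset.sum_const, Finset.card_powersetCard,
    Finset.card_univ, Fintype.card_fin, smul_eq_mul]

lemma card_fiber_cards (hq : 2 ≤ q) (p₀ : ℕ × ℕ) :
    (univ.filter (fun b : Fin n → Fin q => ((Atop b).card, (Lmid b).card) = p₀)).card
      = (q - 2) ^ p₀.2 * n.choose p₀.1 * (n - p₀.1).choose p₀.2 := by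
  classical
  obtain ⟨a, l⟩ := p₀
  simp only
  rw [Finset.card_eq_sum_card_fiberwise (f := fun b => (Atop b, Lmid b)) (t := Tpairs n a l)
    (by
      intro b hb
      rw [Finset.mem_coe, Finset.mem_filter] at hb
      have hb2 := hb.2
      rw [Prod.mk.injEq] at hb2
      rw [Finset.mem_coe, Tpairs, Finset.mem_filter, Finset.mem_product]
      refine ⟨⟨Finset.mem_powersetCard.mpr ⟨Finset.subset_univ _, hb2.1⟩,
        Finset.mem_powersetCard.mpr ⟨Finset.subset_univ _, hb2.2⟩⟩, ?_⟩
      rw [Finset.disjoint_left]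
      intro i hiA hiL
      simp only [Atop, Finset.mem_filter] at hiA
      simp only [Lmid, Finset.mem_filter] at hiL
      exact hiL.2.2 hiA.2)]
  have hterm : ∀ p ∈ Tpairs n a l,
      ((univ.filter (fun b : Fin n → Fin q => ((Atop b).card, (Lmid b).card) = (a, l))).filter
        (fun b => (Atop b, Lmid b) = p)).card = (q - 2) ^ l := by
    intro p hp
    rw [Tpairs, Finset.mem_filter, Finset.mem_product] at hp
    have hA := Finset.mem_powersetCard.mp hp.1.1
    have hL := Finset.mem_powersetCard.mp hp.1.2
    have hset : ((univ.filter (fun b : Fin n → Fin q => ((Atop b).card, (Lmid b).card) = (a, l))).filter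
        (fun b => (Atop b, Lmid b) = p))
        = univ.filter (fun b : Fin n → Fin q => Atop b = p.1 ∧ Lmid b = p.2) := by
      rw [Finset.filter_filter]
      apply Finset.filter_congr
      intro b _
      simp only [Prod.ext_iff, Prod.mk.injEq]
      constructor
      · rintro ⟨_, h1, h2⟩; exact ⟨h1, h2⟩
      · rintro ⟨h1, h2⟩
        exact ⟨⟨by rw [h1, hA.2], by rw [h2, hL.2]⟩, h1, h2⟩
    rw [hset, card_fiber_sets hq p.1 p.2 hp.2, hL.2]
  rw [Finset.sum_congr rfl hterm, Finset.sum_const, card_Tpairs, smul_eq_mul]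
  ring

lemma prod_linear (hq : 2 ≤ q) :
    ∏ b : Fin n → Fin q, ((X:ℝ[X]) - C ((∑ i, lam q (b i) : ℕ) : ℝ))
      = ∏ p ∈ Finset.range (n+1) ×ˢ Finset.range (n+1),
          ((X:ℝ[X]) - C ((q * p.1 + p.2 : ℕ) : ℝ))
            ^ ((q - 2) ^ p.2 * n.choose p.1 * (n - p.1).choose p.2) := by
  classical
  rw [← Finset.prod_fiberwise_of_maps_to
    (g := fun b : Fin n → Fin q => ((Atop b).card, (Lmid b).card))
    (t := Finset.range (n+1) ×ˢ Finset.range (n+1))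
    (by
      intro b _
      rw [Finset.mem_product, Finset.mem_range, Finset.mem_range]
      constructor
      · exact Nat.lt_succ_of_le ((Finset.card_le_univ (Atop b)).trans_eq (Fintype.card_fin n))
      · exact Nat.lt_succ_of_le ((Finset.card_le_univ (Lmid b)).trans_eq (Fintype.card_fin n)))
    (fun b => ((X:ℝ[X]) - C ((∑ i, lam q (b i) : ℕ) : ℝ)))]
  apply Finset.prod_congr rfl
  intro p hp
  have hconst : ∀ b ∈ univ.filter
      (fun b : Fin n → Fin q => ((Atop b).card, (Lmid b).card) = p),
      ((X:ℝ[X]) - C ((∑ i, lam q (b i) : ℕ) : ℝ))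
        = ((X:ℝ[X]) - C ((q * p.1 + p.2 : ℕ) : ℝ)) := by
    intro b hb
    rw [Finset.mem_filter] at hb
    rw [lam_sum hq b]
    rw [← hb.2]
  rw [Finset.prod_congr rfl hconst, Finset.prod_const]
  congr 1
  exact card_fiber_cards hq p

end NHC

namespace NHC
open Finset Polynomial

lemma sum_chooseDiff (m S : ℕ) (hS : 2*S ≤ m) :
    ∑ s ∈ Finset.range (S+1), chooseDiff m s = m.choose S := by
  induction S with
  | zero => simp [chooseDiff]
  | succ S ih =>
    rw [Finset.sum_range_succ, ih (by omega)]
    have hle : m.choose S ≤ m.choose (S+1) :=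
      Nat.choose_le_succ_of_lt_half_left (by omega)
    rw [chooseDiff, if_neg (Nat.succ_ne_zero S)]
    simp only [Nat.add_sub_cancel]
    omega

lemma choose_id (n a l : ℕ) (h : a + l ≤ n) :
    n.choose l * (n - l).choose a = n.choose a * (n - a).choose l := by
  have h1 := Nat.choose_mul (n := n) (k := a + l) (s := l) (by omega)
  have h2 := Nat.choose_mul (n := n) (k := a + l) (s := a) (by omega)
  have e1 : a + l - l = a := by omega
  have e2 : a + l - a = l := by omega
  rw [e1] at h1
  rw [e2] at h2
  have h3 : (a + l).choose l = (a + l).choose a := by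
    rw [← Nat.choose_symm (by omega : a ≤ a + l)]
    congr 1
    omega
  rw [← h1, h3, h2]

lemma telescope_Icc (nn l K : ℕ) (hlK : l ≤ K) (h2 : 2*(K - l) ≤ nn) :
    ∑ k ∈ Finset.Icc l K, chooseDiff nn (k - l) = nn.choose (K - l) := by
  have hmap : Finset.Icc l K = (Finset.Icc 0 (K - l)).map
      ⟨fun s => l + s, add_right_injective l⟩ := by
    rw [Finset.map_eq_image]
    ext k
    simp only [Finset.mem_Icc, Finset.mem_image, Function.Embedding.coeFn_mk]
    constructor
    · intro hk; exact ⟨k - l, by omega, by omega⟩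
    · rintro ⟨s, hs, rfl⟩; omega
  rw [hmap, Finset.sum_map]
  simp only [Function.Embedding.coeFn_mk, Nat.add_sub_cancel_left]
  rw [show Finset.Icc 0 (K - l) = Finset.range (K - l + 1) by
    ext x; simp [Finset.mem_Icc, Finset.mem_range]]
  exact sum_chooseDiff nn (K - l) h2

lemma rhs_eq (q n : ℕ) (hq : 2 ≤ q) :
    (∏ k ∈ Finset.range (n + 1), ∏ l ∈ Finset.Icc (2 * k - n) k,
        ∏ j ∈ Finset.Icc k (n + l - k),
          ((X:ℝ[X]) - C ((q * j - (q - 1) * l : ℕ) : ℝ)) ^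
            ((q - 2) ^ l * n.choose l * chooseDiff (n - l) (k - l)))
      = ∏ p ∈ Finset.range (n+1) ×ˢ Finset.range (n+1),
          ((X:ℝ[X]) - C ((q * p.1 + p.2 : ℕ) : ℝ))
            ^ ((q - 2) ^ p.2 * n.choose p.1 * (n - p.1).choose p.2) := by
  classical
  set S1 : Finset (Σ _ : ℕ, Σ _ : ℕ, ℕ) :=
    (Finset.range (n+1)).sigma
      (fun k => (Finset.Icc (2*k-n) k).sigma (fun l => Finset.Icc k (n+l-k))) with hS1
  have hL : (∏ k ∈ Finset.range (n + 1), ∏ l ∈ Finset.Icc (2 * k - n) k,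
        ∏ j ∈ Finset.Icc k (n + l - k),
          ((X:ℝ[X]) - C ((q * j - (q - 1) * l : ℕ) : ℝ)) ^
            ((q - 2) ^ l * n.choose l * chooseDiff (n - l) (k - l)))
      = ∏ x ∈ S1, ((X:ℝ[X]) - C ((q * x.2.2 - (q - 1) * x.2.1 : ℕ) : ℝ)) ^
          ((q - 2) ^ x.2.1 * n.choose x.2.1 * chooseDiff (n - x.2.1) (x.1 - x.2.1)) := by
    rw [hS1, Finset.prod_sigma]
    apply Finset.prod_congr rfl
    intro k _
    rw [Finset.prod_sigma]
  rw [hL]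
  rw [← Finset.prod_fiberwise_of_maps_to
    (g := fun x : Σ _ : ℕ, Σ _ : ℕ, ℕ => (x.2.2 - x.2.1, x.2.1))
    (t := Finset.range (n+1) ×ˢ Finset.range (n+1))
    (by
      rintro ⟨k, l, j⟩ hx
      simp only [hS1, Finset.mem_sigma, Finset.mem_range, Finset.mem_Icc] at hx
      simp only [Finset.mem_product, Finset.mem_range]
      omega)
    (fun x => ((X:ℝ[X]) - C ((q * x.2.2 - (q - 1) * x.2.1 : ℕ) : ℝ)) ^
          ((q - 2) ^ x.2.1 * n.choose x.2.1 * chooseDiff (n - x.2.1) (x.1 - x.2.1)))]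
  apply Finset.prod_congr rfl
  intro p hp
  simp only [Finset.mem_product, Finset.mem_range] at hp
  have hval : ∀ x ∈ S1.filter
      (fun x : Σ _ : ℕ, Σ _ : ℕ, ℕ => (x.2.2 - x.2.1, x.2.1) = p),
      ((X:ℝ[X]) - C ((q * x.2.2 - (q - 1) * x.2.1 : ℕ) : ℝ)) ^
          ((q - 2) ^ x.2.1 * n.choose x.2.1 * chooseDiff (n - x.2.1) (x.1 - x.2.1))
        = ((X:ℝ[X]) - C ((q * p.1 + p.2 : ℕ) : ℝ)) ^
          ((q - 2) ^ x.2.1 * n.choose x.2.1 * chooseDiff (n - x.2.1) (x.1 - x.2.1)) := by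
    rintro ⟨k, l, j⟩ hx
    try dsimp only at hx ⊢
    rw [Finset.mem_filter] at hx
    have hmem := hx.1
    simp only [hS1, Finset.mem_sigma, Finset.mem_range, Finset.mem_Icc] at hmem
    have hgx := hx.2
    rw [Prod.ext_iff] at hgx
    dsimp only at hgx
    have hl : l = p.2 := hgx.2
    have hj : j = p.1 + l := by omega
    have harith : q * j - (q - 1) * l = q * p.1 + p.2 := by
      have e1 : q * j = q * p.1 + q * l := by rw [hj]; ring
      have e2 : (q - 1) * l = q * l - l := by rw [Nat.sub_mul, one_mul]
      have e3 : l ≤ q * l := Nat.le_mul_of_pos_left l (by omega)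
      omega
    rw [harith]
  rw [Finset.prod_congr rfl hval, Finset.prod_pow_eq_pow_sum]
  congr 1
  by_cases hal : p.1 + p.2 ≤ n
  · -- nonempty fiber: sum via bijection with Icc
    have hsum : ∑ x ∈ S1.filter
        (fun x : Σ _ : ℕ, Σ _ : ℕ, ℕ => (x.2.2 - x.2.1, x.2.1) = p),
        ((q - 2) ^ x.2.1 * n.choose x.2.1 * chooseDiff (n - x.2.1) (x.1 - x.2.1))
        = ∑ k ∈ Finset.Icc p.2 (min (p.1 + p.2) (n - p.1)),
            ((q - 2) ^ p.2 * n.choose p.2 * chooseDiff (n - p.2) (k - p.2)) := by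
      apply Finset.sum_bij' (i := fun x _ => x.1)
        (j := fun k _ => (⟨k, p.2, p.1 + p.2⟩ : Σ _ : ℕ, Σ _ : ℕ, ℕ))
      case hi =>
        rintro ⟨k, l, j⟩ hx
        try dsimp only at hx ⊢
        rw [Finset.mem_filter] at hx
        have hmem := hx.1
        simp only [hS1, Finset.mem_sigma, Finset.mem_range, Finset.mem_Icc] at hmem
        have hgx := hx.2
        rw [Prod.ext_iff] at hgx
        dsimp only at hgx
        rw [Finset.mem_Icc]
        omega
      case hj =>
        intro k hk
        rw [Finset.mem_Icc] at hk
        rw [Finset.mem_filter]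
        constructor
        · simp only [hS1, Finset.mem_sigma, Finset.mem_range, Finset.mem_Icc]
          omega
        · rw [Prod.ext_iff]
          dsimp only
          exact ⟨by omega, rfl⟩
      case left_neg =>
        rintro ⟨k, l, j⟩ hx
        try dsimp only at hx ⊢
        rw [Finset.mem_filter] at hx
        have hmem := hx.1
        simp only [hS1, Finset.mem_sigma, Finset.mem_range, Finset.mem_Icc] at hmem
        have hgx := hx.2
        rw [Prod.ext_iff] at hgx
        dsimp only at hgx
        have h1 : p.2 = l := hgx.2.symm
        have h2 : p.1 + p.2 = j := by omega
        rw [h2, h1]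
      case right_neg =>
        intro k hk
        rfl
      case h =>
        rintro ⟨k, l, j⟩ hx
        try dsimp only at hx ⊢
        rw [Finset.mem_filter] at hx
        have hgx := hx.2
        rw [Prod.ext_iff] at hgx
        dsimp only at hgx
        rw [hgx.2]
    rw [hsum, ← Finset.mul_sum,
      telescope_Icc (n - p.2) p.2 (min (p.1 + p.2) (n - p.1)) (by omega) (by omega)]
    have hKl : min (p.1 + p.2) (n - p.1) - p.2 = min p.1 (n - p.1 - p.2) := by omega
    rw [hKl]
    by_cases hcase : p.1 ≤ n - p.1 - p.2
    · rw [min_eq_left hcase, mul_assoc, choose_id n p.1 p.2 hal, ← mul_assoc]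
    · rw [min_eq_right (by omega)]
      have : n - p.1 - p.2 = (n - p.2) - p.1 := by omega
      rw [this, Nat.choose_symm (by omega), mul_assoc, choose_id n p.1 p.2 hal, ← mul_assoc]
  · -- empty fiber
    have hempty : S1.filter
        (fun x : Σ _ : ℕ, Σ _ : ℕ, ℕ => (x.2.2 - x.2.1, x.2.1) = p) = ∅ := by
      rw [Finset.filter_eq_empty_iff]
      rintro ⟨k, l, j⟩ hx
      try dsimp only at hx ⊢
      simp only [hS1, Finset.mem_sigma, Finset.mem_range, Finset.mem_Icc] at hx
      rw [Prod.ext_iff]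
      dsimp only
      intro hcontra
      omega
    rw [hempty, Finset.sum_empty]
    rw [Nat.choose_eq_zero_of_lt (by omega : n - p.1 < p.2), mul_zero]

end NHC

open scoped Classical in
theorem charpoly_lapMatrix_nonbinaryCube (q n : ℕ) (hq : 2 ≤ q) (hn : 1 ≤ n) :
    ((nonbinaryCube n q).lapMatrix ℝ).charpoly =
      ∏ k ∈ Finset.range (n + 1), ∏ l ∈ Finset.Icc (2 * k - n) k,
        ∏ j ∈ Finset.Icc k (n + l - k),
          (Polynomial.X - Polynomial.C ((q * j - (q - 1) * l : ℕ) : ℝ)) ^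
            ((q - 2) ^ l * n.choose l * chooseDiff (n - l) (k - l)) := by
  rw [NHC.charpoly_lap hq, NHC.prod_linear hq, NHC.rhs_eq q n hq]
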